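/- Suppose λ_k^{k−l,k−l'} = λ_k^{k−l',k−l} = λ_{k−l}^{k,k−l'} for all k, l, l' ∈ ℤ_K. Then for any array (u_{k,j}), ∑_{k∈ℤ_K}∑_{j∈ℤ_M}∑_{l≠0}∑_{l'≠0, l'≠l} u_{k,j} λ_k^{k−l,k−l'} (p_{k,j}^{l,l'} − p_{k,j−1}^{l,l'}) = 0, where p_{k,j}^{l,l'} = (1/6)(2u_{k−l,j}u_{k−l',j} + u_{k−l,j}u_{k−l',j+1} + u_{k−l,j+1}u_{k−l',j} + 2u_{k−l,j+1}u_{k−l',j+1}). -/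
import Mathlib


/-- `p_{k,j}^{l,l'} = (1/6)(2u_{k−l,j}u_{k−l',j} + u_{k−l,j}u_{k−l',j+1}
  + u_{k−l,j+1}u_{k−l',j} + 2u_{k−l,j+1}u_{k−l',j+1})`. -/
noncomputable def pTerm (K M : ℕ) (k : ZMod K) (j : ZMod M) (l l' : ZMod K)
    (u : (ZMod K × ZMod M) → ℝ) : ℝ :=
  (1 / 6) * (2 * u (k - l, j) * u (k - l', j) + u (k - l, j) * u (k - l', j + 1)
    + u (k - l, j + 1) * u (k - l', j) + 2 * u (k - l, j + 1) * u (k - l', j + 1))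

noncomputable def qTerm (K M : ℕ) (u : (ZMod K × ZMod M) → ℝ) (b c : ZMod K) (j : ZMod M) : ℝ :=
  (1 / 6) * (2 * u (b, j) * u (c, j) + u (b, j) * u (c, j + 1)
    + u (b, j + 1) * u (c, j) + 2 * u (b, j + 1) * u (c, j + 1))

lemma pTerm_eq_qTerm (K M : ℕ) (k : ZMod K) (j : ZMod M) (l l' : ZMod K)
    (u : (ZMod K × ZMod M) → ℝ) : pTerm K M k j l l' u = qTerm K M u (k - l) (k - l') j := rfl

lemma telescope (M : ℕ) [NeZero M] (f : ZMod M → ℝ) :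
    ∑ j : ZMod M, (f j - f (j + 1)) = 0 := by
  rw [Finset.sum_sub_distrib]
  rw [show (∑ j : ZMod M, f (j + 1)) = ∑ j : ZMod M, f j from
    Fintype.sum_equiv (Equiv.addRight (1 : ZMod M)) _ _ (fun j => rfl)]
  exact sub_self _

lemma cyclic_q (K M : ℕ) [NeZero M] (u : (ZMod K × ZMod M) → ℝ) (a b c : ZMod K) :
    ∑ j : ZMod M, ((u (a, j) - u (a, j + 1)) * qTerm K M u b c j
      + (u (b, j) - u (b, j + 1)) * qTerm K M u c a j
      + (u (c, j) - u (c, j + 1)) * qTerm K M u a b j) = 0 := by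
  have h : ∀ j : ZMod M, (u (a, j) - u (a, j + 1)) * qTerm K M u b c j
      + (u (b, j) - u (b, j + 1)) * qTerm K M u c a j
      + (u (c, j) - u (c, j + 1)) * qTerm K M u a b j
      = (u (a, j) * u (b, j) * u (c, j)) - (u (a, j + 1) * u (b, j + 1) * u (c, j + 1)) := by
    intro j; unfold qTerm; ring
  rw [Finset.sum_congr rfl (fun j _ => h j)]
  exact telescope M (fun j => u (a, j) * u (b, j) * u (c, j))

def rotTriple (K : ℕ) : (ZMod K × ZMod K × ZMod K) ≃ (ZMod K × ZMod K × ZMod K) where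
  toFun t := (t.1 - t.2.1, t.2.2 - t.2.1, -t.2.1)
  invFun t := (t.1 - t.2.2, -t.2.2, t.2.1 - t.2.2)
  left_inv := by
    rintro ⟨k, l, l'⟩
    simp only [Prod.mk.injEq]
    refine ⟨by ring, by ring, by ring⟩
  right_inv := by
    rintro ⟨k, l, l'⟩
    simp only [Prod.mk.injEq]
    refine ⟨by ring, by ring, by ring⟩

lemma cond_iff (K : ℕ) (l l' : ZMod K) :
    (l ≠ 0 ∧ l' ≠ 0 ∧ l' ≠ l) ↔ (l' - l ≠ 0 ∧ -l ≠ 0 ∧ -l ≠ l' - l) := by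
  constructor
  · rintro ⟨h1, h2, h3⟩
    refine ⟨sub_ne_zero.mpr h3, neg_ne_zero.mpr h1, fun h => h2 ?_⟩
    have := congrArg (· + l) h
    simpa using this.symm
  · rintro ⟨h1, h2, h3⟩
    refine ⟨neg_ne_zero.mp h2, fun h => h3 ?_, sub_ne_zero.mp h1⟩
    rw [h]; ring
  
lemma rotate_sum (K : ℕ) [NeZero K] (G : ZMod K → ZMod K → ZMod K → ℝ) :
    ∑ t : ZMod K × ZMod K × ZMod K,
      (if t.2.1 ≠ 0 ∧ t.2.2 ≠ 0 ∧ t.2.2 ≠ t.2.1 then G t.1 (t.1 - t.2.1) (t.1 - t.2.2) else 0)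
    = ∑ t : ZMod K × ZMod K × ZMod K,
      (if t.2.1 ≠ 0 ∧ t.2.2 ≠ 0 ∧ t.2.2 ≠ t.2.1 then G (t.1 - t.2.1) (t.1 - t.2.2) t.1 else 0) := by
  refine (Fintype.sum_equiv (rotTriple K) _ _ ?_).symm
  rintro ⟨k, l, l'⟩
  show (if l ≠ 0 ∧ l' ≠ 0 ∧ l' ≠ l then G (k - l) (k - l') k else 0)
    = (if l' - l ≠ 0 ∧ -l ≠ 0 ∧ -l ≠ l' - l then
        G (k - l) ((k - l) - (l' - l)) ((k - l) - (-l)) else 0)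
  rw [show (k - l) - (l' - l) = k - l' by ring, show (k - l) - (-l) = k by ring]
  exact if_congr (cond_iff K l l') rfl rfl

lemma nested_to_ite (K : ℕ) [NeZero K] (F : ZMod K → ZMod K → ℝ) :
    ∑ l ∈ Finset.univ.erase (0 : ZMod K), ∑ l' ∈ (Finset.univ.erase (0 : ZMod K)).erase l, F l l'
    = ∑ l : ZMod K, ∑ l' : ZMod K, (if l ≠ 0 ∧ l' ≠ 0 ∧ l' ≠ l then F l l' else 0) := by
  classical
  have inner : ∀ l : ZMod K, (∑ l' : ZMod K, if l ≠ 0 ∧ l' ≠ 0 ∧ l' ≠ l then F l l' else 0)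
      = if l ≠ 0 then ∑ l' ∈ (Finset.univ.erase (0 : ZMod K)).erase l, F l l' else 0 := by
    intro l
    by_cases hl : l ≠ 0
    · rw [if_pos hl]
      rw [show (Finset.univ.erase (0 : ZMod K)).erase l
          = Finset.univ.filter (fun l' : ZMod K => l' ≠ 0 ∧ l' ≠ l) by
        ext x; simp [and_comm]]
      rw [Finset.sum_filter]
      exact Finset.sum_congr rfl (fun l' _ => by
        by_cases h : l' ≠ 0 ∧ l' ≠ l
        · rw [if_pos ⟨hl, h⟩, if_pos h]
        · rw [if_neg (fun hc => h ⟨hc.2.1, hc.2.2⟩), if_neg h])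
    · rw [if_neg hl]
      exact Finset.sum_eq_zero (fun l' _ => if_neg (fun hc => hl hc.1))
  rw [Finset.sum_congr rfl (fun l _ => inner l)]
  rw [← Finset.sum_filter, Finset.filter_ne' Finset.univ (0 : ZMod K)]

lemma jsum (K M : ℕ) [NeZero M] (lamv : ℝ) (u : (ZMod K × ZMod M) → ℝ) (a b c : ZMod K) :
    ∑ j : ZMod M, u (a, j) * lamv * (qTerm K M u b c j - qTerm K M u b c (j - 1))
    = lamv * ∑ j : ZMod M, (u (a, j) - u (a, j + 1)) * qTerm K M u b c j := by
  have h2 : ∑ j : ZMod M, u (a, j) * lamv * qTerm K M u b c (j - 1)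
      = ∑ j : ZMod M, u (a, j + 1) * lamv * qTerm K M u b c j := by
    refine (Fintype.sum_equiv (Equiv.addRight (1 : ZMod M)) _ _ ?_).symm
    intro j
    simp [Equiv.coe_addRight, add_sub_cancel_right]
  calc ∑ j : ZMod M, u (a, j) * lamv * (qTerm K M u b c j - qTerm K M u b c (j - 1))
      = (∑ j : ZMod M, u (a, j) * lamv * qTerm K M u b c j)
        - ∑ j : ZMod M, u (a, j) * lamv * qTerm K M u b c (j - 1) := by
        rw [← Finset.sum_sub_distrib]; exact Finset.sum_congr rfl (fun j _ => by ring)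
    _ = (∑ j : ZMod M, u (a, j) * lamv * qTerm K M u b c j)
        - ∑ j : ZMod M, u (a, j + 1) * lamv * qTerm K M u b c j := by rw [h2]
    _ = lamv * ∑ j : ZMod M, (u (a, j) - u (a, j + 1)) * qTerm K M u b c j := by
        rw [← Finset.sum_sub_distrib, Finset.mul_sum]
        exact Finset.sum_congr rfl (fun j _ => by ring)


/-- If `λ_k^{k−l,k−l'} = λ_k^{k−l',k−l} = λ_{k−l}^{k,k−l'}` for all `k, l, l'`, then
`∑_{k,j,l≠0,l'≠0,l'≠l} u_{k,j} λ_k^{k−l,k−l'} (p_{k,j}^{l,l'} − p_{k,j−1}^{l,l'}) = 0`. -/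
theorem sum_u_mul_p_diff_eq_zero (K M : ℕ) [NeZero K] [NeZero M] (hK : 3 ≤ K) (hM : 2 ≤ M)
    (lam : ZMod K → ZMod K → ZMod K → ℝ)
    (hlam₁ : ∀ k l l' : ZMod K, lam k (k - l) (k - l') = lam k (k - l') (k - l))
    (hlam₂ : ∀ k l l' : ZMod K, lam k (k - l) (k - l') = lam (k - l) k (k - l'))
    (u : (ZMod K × ZMod M) → ℝ) :
    ∑ k : ZMod K, ∑ j : ZMod M, ∑ l ∈ Finset.univ.erase (0 : ZMod K),
        ∑ l' ∈ (Finset.univ.erase (0 : ZMod K)).erase l,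
          u (k, j) * lam k (k - l) (k - l')
            * (pTerm K M k j l l' u - pTerm K M k (j - 1) l l' u) = 0 := by
  classical
  have sym1 : ∀ a b c : ZMod K, lam a b c = lam a c b := by
    intro a b c
    have := hlam₁ a (a - b) (a - c)
    simpa using this
  have sym2 : ∀ a b c : ZMod K, lam a b c = lam b a c := by
    intro a b c
    have := hlam₂ a (a - b) (a - c)
    simpa using this
  set g : ZMod K → ZMod K → ZMod K → ℝ := fun a b c =>
    lam a b c * ∑ j : ZMod M, (u (a, j) - u (a, j + 1)) * qTerm K M u b c j with hg
  have step1 : (∑ k : ZMod K, ∑ j : ZMod M, ∑ l ∈ Finset.univ.erase (0 : ZMod K),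
        ∑ l' ∈ (Finset.univ.erase (0 : ZMod K)).erase l,
          u (k, j) * lam k (k - l) (k - l')
            * (pTerm K M k j l l' u - pTerm K M k (j - 1) l l' u))
      = ∑ t : ZMod K × ZMod K × ZMod K,
          (if t.2.1 ≠ 0 ∧ t.2.2 ≠ 0 ∧ t.2.2 ≠ t.2.1 then
            g t.1 (t.1 - t.2.1) (t.1 - t.2.2) else 0) := by
    rw [Fintype.sum_prod_type]
    refine Finset.sum_congr rfl (fun k _ => ?_)
    rw [Finset.sum_comm]
    calc ∑ l ∈ Finset.univ.erase (0 : ZMod K), ∑ j : ZMod M,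
          ∑ l' ∈ (Finset.univ.erase (0 : ZMod K)).erase l,
          u (k, j) * lam k (k - l) (k - l')
            * (pTerm K M k j l l' u - pTerm K M k (j - 1) l l' u)
        = ∑ l ∈ Finset.univ.erase (0 : ZMod K),
          ∑ l' ∈ (Finset.univ.erase (0 : ZMod K)).erase l, g k (k - l) (k - l') := by
          refine Finset.sum_congr rfl (fun l _ => ?_)
          rw [Finset.sum_comm]
          refine Finset.sum_congr rfl (fun l' _ => ?_)
          simp only [pTerm_eq_qTerm]
          exact jsum K M (lam k (k - l) (k - l')) u k (k - l) (k - l')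
      _ = ∑ y : ZMod K × ZMod K,
            (if y.1 ≠ 0 ∧ y.2 ≠ 0 ∧ y.2 ≠ y.1 then g k (k - y.1) (k - y.2) else 0) := by
          rw [Fintype.sum_prod_type]
          exact nested_to_ite K (fun l l' => g k (k - l) (k - l'))
  have hrot1 := rotate_sum K g
  have hrot2 := rotate_sum K (fun a b c => g b c a)
  have hzero : ∀ a b c : ZMod K, g a b c + g b c a + g c a b = 0 := by
    intro a b c
    have e1 : lam b c a = lam a b c := by
      rw [sym2 b c a, sym1 c b a, sym2 c a b, sym1 a c b]
    have e2 : lam c a b = lam a b c := by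
      rw [sym2 c a b, sym1 a c b]
    rw [hg]
    simp only
    rw [e1, e2, ← mul_add, ← mul_add, ← Finset.sum_add_distrib, ← Finset.sum_add_distrib,
      cyclic_q K M u a b c, mul_zero]
  have key : (∑ t : ZMod K × ZMod K × ZMod K,
      (if t.2.1 ≠ 0 ∧ t.2.2 ≠ 0 ∧ t.2.2 ≠ t.2.1 then
        g t.1 (t.1 - t.2.1) (t.1 - t.2.2) else 0)) = 0 := by
    have h3 : (∑ t : ZMod K × ZMod K × ZMod K,
        (if t.2.1 ≠ 0 ∧ t.2.2 ≠ 0 ∧ t.2.2 ≠ t.2.1 then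
          g t.1 (t.1 - t.2.1) (t.1 - t.2.2) else 0))
        + (∑ t : ZMod K × ZMod K × ZMod K,
        (if t.2.1 ≠ 0 ∧ t.2.2 ≠ 0 ∧ t.2.2 ≠ t.2.1 then
          g t.1 (t.1 - t.2.1) (t.1 - t.2.2) else 0))
        + (∑ t : ZMod K × ZMod K × ZMod K,
        (if t.2.1 ≠ 0 ∧ t.2.2 ≠ 0 ∧ t.2.2 ≠ t.2.1 then
          g t.1 (t.1 - t.2.1) (t.1 - t.2.2) else 0)) = 0 := by
      nth_rewrite 3 [hrot1]
      rw [hrot2]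
      nth_rewrite 2 [hrot1]
      rw [← Finset.sum_add_distrib, ← Finset.sum_add_distrib]
      refine Finset.sum_eq_zero (fun t _ => ?_)
      split_ifs
      · exact hzero t.1 (t.1 - t.2.1) (t.1 - t.2.2)
      · simp
    linarith
  rw [step1, key]
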